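/- The residue property of the domain wall partition function K_n: as x_n → y_n, K_n(x̄|ȳ) = g(x_n,y_n) · f(y_n, ȳ_n) · f(x̄_n, x_n) · K_{n-1}(x̄_n|ȳ_n) + regular terms; equivalently, the residue of K_n(x̄|ȳ) at x_n = y_n equals c · f(y_n, ȳ_n) · f(x̄_n, x_n) · K_{n-1}(x̄_n|ȳ_n), where K_n(x̄|ȳ) = Δ'_n(x̄) Δ_n(ȳ) h(x̄,ȳ) det_n[t(x_j,y_k)], Δ'_n(x̄) = Π_{j>k} g(x_j,x_k), Δ_n(ȳ) = Π_{j<k} g(y_j,y_k), and bars with subscripts denote omission of the indicated element. -/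

import Mathlib

noncomputable def gfun (c x y : ℂ) : ℂ := c / (x - y)
noncomputable def ffun (c x y : ℂ) : ℂ := (x - y + c) / (x - y)
noncomputable def hfun (c x y : ℂ) : ℂ := (x - y + c) / c
noncomputable def tfun (c x y : ℂ) : ℂ := c ^ 2 / ((x - y) * (x - y + c))

/-- The Izergin determinant (domain wall partition function)
`K_n(x̄|ȳ) = Δ'_n(x̄) Δ_n(ȳ) h(x̄,ȳ) det_n[t(x_j,y_k)]`. -/
noncomputable def Kdet (c : ℂ) (n : ℕ) (x y : Fin n → ℂ) : ℂ :=
  (∏ j : Fin n, ∏ k : Fin n, if k < j then gfun c (x j) (x k) else 1) *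
  (∏ j : Fin n, ∏ k : Fin n, if j < k then gfun c (y j) (y k) else 1) *
  (∏ j : Fin n, ∏ k : Fin n, hfun c (x j) (y k)) *
  (Matrix.of fun j k => tfun c (x j) (y k)).det

/-- Regularized matrix: the last row is multiplied by `z - y_n`, with the
singular entry replaced by its cancelled form. -/
noncomputable def Bmat (c : ℂ) (n : ℕ) (x y : Fin (n + 1) → ℂ) (z : ℂ) :
    Matrix (Fin (n + 1)) (Fin (n + 1)) ℂ :=
  Matrix.of fun j k =>
    if j = Fin.last n then
      (if k = Fin.last n then c ^ 2 / (z - y (Fin.last n) + c)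
       else (z - y (Fin.last n)) * tfun c z (y k))
    else tfun c (x j) (y k)

lemma Bmat_det_eq (c : ℂ) (n : ℕ) (x y : Fin (n + 1) → ℂ) (z : ℂ)
    (hz : z ≠ y (Fin.last n)) :
    (Bmat c n x y z).det = (z - y (Fin.last n)) *
      (Matrix.of fun j k =>
        tfun c (Function.update x (Fin.last n) z j) (y k)).det := by
  classical
  have hzw : z - y (Fin.last n) ≠ 0 := sub_ne_zero.mpr hz
  set M : Matrix (Fin (n + 1)) (Fin (n + 1)) ℂ :=
    Matrix.of fun j k => tfun c (Function.update x (Fin.last n) z j) (y k) with hM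
  have hBM : Bmat c n x y z =
      M.updateRow (Fin.last n) ((z - y (Fin.last n)) • M (Fin.last n)) := by
    ext j k
    rw [Matrix.updateRow_apply]
    by_cases hj : j = Fin.last n
    · subst hj
      simp only [Bmat, Matrix.of_apply, hM, Pi.smul_apply, smul_eq_mul,
        Function.update_self, eq_self_iff_true, if_true]
      by_cases hk : k = Fin.last n
      · subst hk
        simp only [eq_self_iff_true, if_true]
        unfold tfun
        rcases eq_or_ne (z - y (Fin.last n) + c) 0 with h0 | h0
        · simp [h0]
        · field_simp
      · simp only [if_neg hk]
    · simp only [if_neg hj, Bmat, Matrix.of_apply, hM,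
        Function.update_of_ne hj]
  rw [hBM, Matrix.det_updateRow_smul, Matrix.updateRow_eq_self]

lemma Bmat_tendsto (c : ℂ) (hc : c ≠ 0) (n : ℕ) (x y : Fin (n + 1) → ℂ)
    (hy : ∀ k : Fin (n + 1), k ≠ Fin.last n → y (Fin.last n) ≠ y k)
    (hyc : ∀ k : Fin (n + 1), k ≠ Fin.last n → y (Fin.last n) - y k + c ≠ 0) :
    Filter.Tendsto (fun z => (Bmat c n x y z).det) (nhds (y (Fin.last n)))
      (nhds ((Bmat c n x y (y (Fin.last n))).det)) := by
  classical
  simp only [Matrix.det_apply']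
  apply tendsto_finset_sum
  intro σ _
  apply Filter.Tendsto.const_mul
  apply tendsto_finset_prod
  intro i _
  -- entry (σ i, i)
  by_cases hk : i = Fin.last n
  · subst hk
    by_cases hj : σ (Fin.last n) = Fin.last n
    · simp only [Bmat, Matrix.of_apply, hj, eq_self_iff_true, if_true]
      have : ContinuousAt (fun z : ℂ => c ^ 2 / (z - y (Fin.last n) + c))
          (y (Fin.last n)) := by
        apply ContinuousAt.div continuousAt_const (by fun_prop)
        simpa using hc
      exact this
    · simp only [Bmat, Matrix.of_apply, if_neg hj]
      exact tendsto_const_nhds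
  · by_cases hj : σ i = Fin.last n
    · simp only [Bmat, Matrix.of_apply, hj, eq_self_iff_true, if_true, if_neg hk]
      unfold tfun
      have h1 : y (Fin.last n) - y i ≠ 0 := sub_ne_zero.mpr (hy i hk)
      have h2 : y (Fin.last n) - y i + c ≠ 0 := hyc i hk
      have : ContinuousAt (fun z : ℂ =>
          (z - y (Fin.last n)) * (c ^ 2 / ((z - y i) * (z - y i + c))))
          (y (Fin.last n)) := by
        apply ContinuousAt.mul (by fun_prop)
        apply ContinuousAt.div continuousAt_const (by fun_prop)
        exact mul_ne_zero h1 h2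
      exact this
    · simp only [Bmat, Matrix.of_apply, if_neg hj]
      exact tendsto_const_nhds

lemma Bmat_det_at (c : ℂ) (hc : c ≠ 0) (n : ℕ) (x y : Fin (n + 1) → ℂ) :
    (Bmat c n x y (y (Fin.last n))).det =
      c * (Matrix.of fun j k : Fin n =>
        tfun c (x j.castSucc) (y k.castSucc)).det := by
  classical
  rw [Matrix.det_succ_row (Bmat c n x y (y (Fin.last n))) (Fin.last n)]
  rw [Finset.sum_eq_single (Fin.last n)]
  · have hBll : Bmat c n x y (y (Fin.last n)) (Fin.last n) (Fin.last n) = c := by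
      simp only [Bmat, Matrix.of_apply, eq_self_iff_true, if_true, sub_self, zero_add]
      rw [pow_two, mul_div_assoc, div_self hc, mul_one]
    have hsub : (Bmat c n x y (y (Fin.last n))).submatrix
        (Fin.last n).succAbove (Fin.last n).succAbove =
        Matrix.of fun j k : Fin n => tfun c (x j.castSucc) (y k.castSucc) := by
      ext j k
      simp only [Matrix.submatrix_apply, Fin.succAbove_last_apply, Bmat,
        Matrix.of_apply, if_neg (Fin.castSucc_lt_last j).ne]
    rw [hBll, hsub]
    have hsign : (-1 : ℂ) ^ ((Fin.last n : ℕ) + (Fin.last n : ℕ)) = 1 := by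
      rw [← two_mul, pow_mul]
      norm_num
    rw [hsign, one_mul]
  · intro k _ hk
    have : Bmat c n x y (y (Fin.last n)) (Fin.last n) k = 0 := by
      simp only [Bmat, Matrix.of_apply, eq_self_iff_true, if_true, if_neg hk,
        sub_self, zero_mul]
    rw [this]
    ring
  · intro h
    exact absurd (Finset.mem_univ _) h

/-- value of the `g`-prefactor in the `x` variables at the degeneration point -/
lemma prodg_update (c w : ℂ) (n : ℕ) (x : Fin (n + 1) → ℂ) :
    (∏ j : Fin (n + 1), ∏ k : Fin (n + 1),
      if k < j then gfun c (Function.update x (Fin.last n) w j)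
        (Function.update x (Fin.last n) w k) else 1)
    = (∏ j : Fin n, ∏ k : Fin n,
        if k < j then gfun c (x j.castSucc) (x k.castSucc) else 1)
      * ∏ k : Fin n, gfun c w (x k.castSucc) := by
  classical
  rw [Fin.prod_univ_castSucc]
  congr 1
  · apply Finset.prod_congr rfl
    intro j _
    rw [Fin.prod_univ_castSucc]
    rw [if_neg ((Fin.castSucc_lt_last j).asymm), mul_one]
    apply Finset.prod_congr rfl
    intro k _
    rw [Function.update_of_ne (Fin.castSucc_lt_last j).ne,
      Function.update_of_ne (Fin.castSucc_lt_last k).ne]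
    simp only [Fin.castSucc_lt_castSucc_iff]
  · rw [Fin.prod_univ_castSucc]
    rw [if_neg (lt_irrefl _), mul_one]
    apply Finset.prod_congr rfl
    intro k _
    rw [if_pos (Fin.castSucc_lt_last k), Function.update_self,
      Function.update_of_ne (Fin.castSucc_lt_last k).ne]

/-- splitting of the `g`-prefactor in the `y` variables -/
lemma prody_split (c : ℂ) (n : ℕ) (y : Fin (n + 1) → ℂ) :
    (∏ j : Fin (n + 1), ∏ k : Fin (n + 1),
      if j < k then gfun c (y j) (y k) else 1)
    = (∏ j : Fin n, ∏ k : Fin n,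
        if j < k then gfun c (y j.castSucc) (y k.castSucc) else 1)
      * ∏ j : Fin n, gfun c (y j.castSucc) (y (Fin.last n)) := by
  classical
  rw [Fin.prod_univ_castSucc]
  have hlast : (∏ k : Fin (n + 1),
      if Fin.last n < k then gfun c (y (Fin.last n)) (y k) else 1) = 1 := by
    apply Finset.prod_eq_one
    intro k _
    rw [if_neg (not_lt.mpr (Fin.le_last k))]
  rw [hlast, mul_one]
  have hsplit : ∀ j : Fin n, (∏ k : Fin (n + 1),
      if j.castSucc < k then gfun c (y j.castSucc) (y k) else 1)
      = (∏ k : Fin n, if j < k then gfun c (y j.castSucc) (y k.castSucc) else 1)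
        * gfun c (y j.castSucc) (y (Fin.last n)) := by
    intro j
    rw [Fin.prod_univ_castSucc]
    rw [if_pos (Fin.castSucc_lt_last j)]
    refine congrArg₂ (· * ·) (Finset.prod_congr rfl fun k _ => ?_) rfl
    simp only [Fin.castSucc_lt_castSucc_iff]
  calc (∏ j : Fin n, ∏ k : Fin (n + 1),
        if j.castSucc < k then gfun c (y j.castSucc) (y k) else 1)
      = ∏ j : Fin n, ((∏ k : Fin n,
          if j < k then gfun c (y j.castSucc) (y k.castSucc) else 1)
          * gfun c (y j.castSucc) (y (Fin.last n))) :=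
        Finset.prod_congr rfl fun j _ => hsplit j
    _ = _ := Finset.prod_mul_distrib

/-- splitting of the `h`-prefactor -/
lemma prodh_update (c w : ℂ) (n : ℕ) (x y : Fin (n + 1) → ℂ) :
    (∏ j : Fin (n + 1), ∏ k : Fin (n + 1),
      hfun c (Function.update x (Fin.last n) w j) (y k))
    = ((∏ j : Fin n, ∏ k : Fin n, hfun c (x j.castSucc) (y k.castSucc))
        * ∏ j : Fin n, hfun c (x j.castSucc) (y (Fin.last n)))
      * ((∏ k : Fin n, hfun c w (y k.castSucc)) * hfun c w (y (Fin.last n))) := by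
  classical
  rw [Fin.prod_univ_castSucc]
  congr 1
  · have hsplit : ∀ j : Fin n, (∏ k : Fin (n + 1),
        hfun c (Function.update x (Fin.last n) w j.castSucc) (y k))
        = (∏ k : Fin n, hfun c (x j.castSucc) (y k.castSucc))
          * hfun c (x j.castSucc) (y (Fin.last n)) := by
      intro j
      rw [Fin.prod_univ_castSucc, Function.update_of_ne (Fin.castSucc_lt_last j).ne]
    calc (∏ j : Fin n, ∏ k : Fin (n + 1),
          hfun c (Function.update x (Fin.last n) w j.castSucc) (y k))
        = ∏ j : Fin n, ((∏ k : Fin n, hfun c (x j.castSucc) (y k.castSucc))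
            * hfun c (x j.castSucc) (y (Fin.last n))) :=
          Finset.prod_congr rfl fun j _ => hsplit j
      _ = _ := Finset.prod_mul_distrib
  · rw [Fin.prod_univ_castSucc, Function.update_self]

lemma keyfactor (c a b w : ℂ) (hc : c ≠ 0) (ha : a ≠ w) (hb : b ≠ w) :
    gfun c w a * gfun c b w * (hfun c a w * hfun c w b)
      = ffun c w b * ffun c a w := by
  unfold gfun hfun ffun
  have h1 : w - a ≠ 0 := sub_ne_zero.mpr (Ne.symm ha)
  have h2 : b - w ≠ 0 := sub_ne_zero.mpr hb
  have h3 : a - w ≠ 0 := sub_ne_zero.mpr ha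
  have h4 : w - b ≠ 0 := sub_ne_zero.mpr (Ne.symm hb)
  field_simp
  ring

/-- the residue of `K_{n+1}(x̄|ȳ)` at `x_n = y_n` equals
`c · f(y_n, ȳ_n) · f(x̄_n, x_n) · K_n(x̄_n|ȳ_n)`. -/
theorem Kdet_residue (c : ℂ) (hc : c ≠ 0) (n : ℕ) (x y : Fin (n + 1) → ℂ)
    (hx : ∀ j k : Fin n, j ≠ k → x j.castSucc ≠ x k.castSucc)
    (hy : ∀ j k : Fin (n + 1), j ≠ k → y j ≠ y k)
    (hxy : ∀ (j : Fin n) (k : Fin (n + 1)),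
      x j.castSucc ≠ y k ∧ x j.castSucc - y k + c ≠ 0)
    (hyc : ∀ k : Fin (n + 1), k ≠ Fin.last n → y (Fin.last n) - y k + c ≠ 0) :
    Filter.Tendsto
      (fun z => (z - y (Fin.last n)) *
        Kdet c (n + 1) (Function.update x (Fin.last n) z) y)
      (nhdsWithin (y (Fin.last n)) {y (Fin.last n)}ᶜ)
      (nhds (c * (∏ k : Fin n, ffun c (y (Fin.last n)) (y k.castSucc)) *
        (∏ j : Fin n, ffun c (x j.castSucc) (y (Fin.last n))) *
        Kdet c n (fun i => x i.castSucc) (fun i => y i.castSucc))) := by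
  classical
  set G : ℂ → ℂ := fun z =>
    (∏ j : Fin (n + 1), ∏ k : Fin (n + 1),
      if k < j then gfun c (Function.update x (Fin.last n) z j)
        (Function.update x (Fin.last n) z k) else 1) *
    (∏ j : Fin (n + 1), ∏ k : Fin (n + 1),
      if j < k then gfun c (y j) (y k) else 1) *
    (∏ j : Fin (n + 1), ∏ k : Fin (n + 1),
      hfun c (Function.update x (Fin.last n) z j) (y k)) *
    (Bmat c n x y z).det with hG
  -- Step 1: eventual equality on the punctured neighbourhood
  have hev : ∀ z : ℂ, z ≠ y (Fin.last n) →
      G z = (z - y (Fin.last n)) *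
        Kdet c (n + 1) (Function.update x (Fin.last n) z) y := by
    intro z hz
    simp only [hG]
    unfold Kdet
    rw [Bmat_det_eq c n x y z hz]
    ring
  -- Step 2: continuity of `G` at `y (Fin.last n)`
  have hcont : Filter.Tendsto G (nhds (y (Fin.last n)))
      (nhds (G (y (Fin.last n)))) := by
    simp only [hG]
    have hupd_cont : ∀ j : Fin (n + 1),
        Continuous fun z : ℂ => Function.update x (Fin.last n) z j := by
      intro j
      rcases eq_or_ne j (Fin.last n) with rfl | hj
      · simpa only [Function.update_self] using continuous_id'
      · simp only [Function.update_of_ne hj]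
        exact continuous_const
    have hXw : ∀ j k : Fin (n + 1), k < j →
        Function.update x (Fin.last n) (y (Fin.last n)) j -
          Function.update x (Fin.last n) (y (Fin.last n)) k ≠ 0 := by
      intro j k hkj
      refine sub_ne_zero.mpr ?_
      have hkl : k ≠ Fin.last n := ne_of_lt (lt_of_lt_of_le hkj (Fin.le_last j))
      obtain ⟨k', rfl⟩ := Fin.exists_castSucc_eq.mpr hkl
      rcases eq_or_ne j (Fin.last n) with rfl | hj
      · rw [Function.update_self, Function.update_of_ne (Fin.castSucc_lt_last k').ne]
        exact Ne.symm (hxy k' (Fin.last n)).1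
      · obtain ⟨j', rfl⟩ := Fin.exists_castSucc_eq.mpr hj
        rw [Function.update_of_ne (Fin.castSucc_lt_last j').ne,
          Function.update_of_ne (Fin.castSucc_lt_last k').ne]
        exact hx j' k' (Fin.castSucc_lt_castSucc_iff.mp hkj).ne'
    apply Filter.Tendsto.mul
    apply Filter.Tendsto.mul
    apply Filter.Tendsto.mul
    · apply tendsto_finset_prod
      intro j _
      apply tendsto_finset_prod
      intro k _
      by_cases hkj : k < j
      · simp only [if_pos hkj]
        unfold gfun
        exact ContinuousAt.div continuousAt_const
          (((hupd_cont j).sub (hupd_cont k)).continuousAt) (hXw j k hkj)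
      · simp only [if_neg hkj]
        exact tendsto_const_nhds
    · exact tendsto_const_nhds
    · apply tendsto_finset_prod
      intro j _
      apply tendsto_finset_prod
      intro k _
      unfold hfun
      exact ContinuousAt.div
        ((((hupd_cont j).sub continuous_const).add continuous_const).continuousAt)
        continuousAt_const hc
    · exact Bmat_tendsto c hc n x y
        (fun k hk => hy (Fin.last n) k (Ne.symm hk)) hyc
  -- Step 3: the value of `G` at `y (Fin.last n)`
  have hval : G (y (Fin.last n)) =
      c * (∏ k : Fin n, ffun c (y (Fin.last n)) (y k.castSucc)) *
        (∏ j : Fin n, ffun c (x j.castSucc) (y (Fin.last n))) *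
        Kdet c n (fun i => x i.castSucc) (fun i => y i.castSucc) := by
    simp only [hG]
    rw [prodg_update, prody_split, prodh_update, Bmat_det_at c hc n x y]
    unfold Kdet
    have hww : hfun c (y (Fin.last n)) (y (Fin.last n)) = 1 := by
      unfold hfun
      rw [sub_self, zero_add, div_self hc]
    rw [hww, mul_one]
    -- reorganize into a single product identity
    have hkey : (∏ k : Fin n, gfun c (y (Fin.last n)) (x k.castSucc)) *
        (∏ j : Fin n, gfun c (y j.castSucc) (y (Fin.last n))) *
        ((∏ j : Fin n, hfun c (x j.castSucc) (y (Fin.last n))) *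
         (∏ k : Fin n, hfun c (y (Fin.last n)) (y k.castSucc)))
        = (∏ k : Fin n, ffun c (y (Fin.last n)) (y k.castSucc)) *
          (∏ j : Fin n, ffun c (x j.castSucc) (y (Fin.last n))) := by
      rw [← Finset.prod_mul_distrib, ← Finset.prod_mul_distrib,
        ← Finset.prod_mul_distrib, ← Finset.prod_mul_distrib]
      apply Finset.prod_congr rfl
      intro k _
      exact keyfactor c (x k.castSucc) (y k.castSucc) (y (Fin.last n)) hc
        (hxy k (Fin.last n)).1
        (hy k.castSucc (Fin.last n) (Fin.castSucc_lt_last k).ne)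
    calc _ = ((∏ j : Fin n, ∏ k : Fin n,
            if k < j then gfun c (x j.castSucc) (x k.castSucc) else 1) *
          (∏ j : Fin n, ∏ k : Fin n,
            if j < k then gfun c (y j.castSucc) (y k.castSucc) else 1) *
          (∏ j : Fin n, ∏ k : Fin n, hfun c (x j.castSucc) (y k.castSucc)) *
          (Matrix.of fun j k : Fin n =>
            tfun c (x j.castSucc) (y k.castSucc)).det) * c *
          ((∏ k : Fin n, gfun c (y (Fin.last n)) (x k.castSucc)) *
           (∏ j : Fin n, gfun c (y j.castSucc) (y (Fin.last n))) *
           ((∏ j : Fin n, hfun c (x j.castSucc) (y (Fin.last n))) *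
            (∏ k : Fin n, hfun c (y (Fin.last n)) (y k.castSucc)))) := by ring
      _ = _ := by rw [hkey]; ring
  -- Combine
  have hclose : Filter.Tendsto G (nhdsWithin (y (Fin.last n)) {y (Fin.last n)}ᶜ)
      (nhds (c * (∏ k : Fin n, ffun c (y (Fin.last n)) (y k.castSucc)) *
        (∏ j : Fin n, ffun c (x j.castSucc) (y (Fin.last n))) *
        Kdet c n (fun i => x i.castSucc) (fun i => y i.castSucc))) := by
    rw [← hval]
    exact hcont.mono_left nhdsWithin_le_nhds
  refine hclose.congr' ?_
  filter_upwards [self_mem_nhdsWithin] with z hz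
  exact hev z hz
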